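/- Let Γ = (C, A, Δ) be a normed BPA system and R ⊆ C_G. If γ ≃_R δ and α ≃ β (branching bisimilar), then αγ ≃_R βδ. In particular, γ ≃_R δ implies αγ ≃_R αδ for every process α. -/

import Mathlib

open Relation

/-- A BPA system over constants `C` and actions `A`: a distinguished silent
action `tau`, and a finite set of transition rules `X —ℓ→ α`, where `C` and
`A` are finite. -/
structure BPA (C A : Type) where
  tau : A
  rules : Set (C × A × List C)
  finC : Finite C
  finA : Finite A
  finRules : rules.Finite

namespace BPA

variable {C A : Type}

/-- One-step labelled transition between processes.  Processes are strings
over `C` (lists, with the leftmost constant acting first). -/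
def Step (Γ : BPA C A) (ℓ : A) (p q : List C) : Prop :=
  ∃ X γ β, (X, ℓ, γ) ∈ Γ.rules ∧ p = X :: β ∧ q = γ ++ β

/-- A transition carrying an arbitrary label. -/
def AnyStep (Γ : BPA C A) (p q : List C) : Prop := ∃ ℓ, Γ.Step ℓ p q

/-- `⟹` : the reflexive transitive closure of silent steps. -/
def TauStar (Γ : BPA C A) : List C → List C → Prop := ReflTransGen (Γ.Step Γ.tau)

/-- A process is normed if it can reach the empty process `ε`. -/
def NormedProc (Γ : BPA C A) (p : List C) : Prop := ReflTransGen Γ.AnyStep p []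

/-- The BPA system is normed. -/
def Normed (Γ : BPA C A) : Prop := ∀ X : C, Γ.NormedProc [X]

/-- A chain of `s`-steps starting at `start` in which every visited state is
related by `r` to the process `anchor`. -/
def RelChain (s : List C → List C → Prop) (r : List C → List C → Prop)
    (anchor : List C) : List C → List C → Prop :=
  ReflTransGen fun x y => s x y ∧ r anchor y

/-- Branching bisimulation (an equivalence relation by convention). -/
def IsBranchingBisim (Γ : BPA C A) (r : List C → List C → Prop) : Prop :=
  Equivalence r ∧ ∀ α β, r α β →
    ((∀ a, a ≠ Γ.tau → ∀ α', Γ.Step a α α' →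
        ∃ β'' β', RelChain (Γ.Step Γ.tau) r β β β'' ∧ Γ.Step a β'' β' ∧ r α' β') ∧
     (∀ α', Γ.Step Γ.tau α α' → ¬ r α α' →
        ∃ β'' β', RelChain (Γ.Step Γ.tau) r β β β'' ∧ Γ.Step Γ.tau β'' β' ∧
          ¬ r β'' β' ∧ r α' β'))

/-- Branching bisimilarity `≃` : the largest branching bisimulation. -/
def Bisim (Γ : BPA C A) (α β : List C) : Prop :=
  ∃ r, Γ.IsBranchingBisim r ∧ r α β

/-- A ground process: it can silently reach `ε`. -/
def Ground (Γ : BPA C A) (p : List C) : Prop := Γ.TauStar p []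

/-- The set `C_G` of ground constants. -/
def GroundC (Γ : BPA C A) : Set C := {X | Γ.Ground [X]}

/-- `R`-equality `=_R`: the two processes differ only in suffixes over `R`. -/
def REq (R : Set C) (α β : List C) : Prop :=
  ∃ ζ a b, α = ζ ++ a ∧ β = ζ ++ b ∧ (∀ X ∈ a, X ∈ R) ∧ (∀ X ∈ b, X ∈ R)

open Classical in
/-- The `R`-normal form `α_R` of a process: delete the maximal suffix over `R`. -/
noncomputable def nf (R : Set C) (α : List C) : List C :=
  (α.reverse.dropWhile fun X => decide (X ∈ R)).reverse

/-- A process is in `R`-normal form. -/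
def InNF (R : Set C) (α : List C) : Prop := nf R α = α

/-- The `R`-transition relation `—ℓ→_R` between `R`-normal forms. -/
def StepR (Γ : BPA C A) (R : Set C) (ℓ : A) (ζ η : List C) : Prop :=
  ∃ α β, ζ = nf R α ∧ η = nf R β ∧ Γ.Step ℓ α β

/-- `⟹_R`. -/
def TauStarR (Γ : BPA C A) (R : Set C) : List C → List C → Prop :=
  ReflTransGen (Γ.StepR R Γ.tau)

/-- `R`-bisimulation: an equivalence relation containing `=_R` satisfying
ground preservation and the relativized branching transfer conditions. -/
def IsRBisim (Γ : BPA C A) (R : Set C) (r : List C → List C → Prop) : Prop :=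
  Equivalence r ∧ (∀ α β, REq R α β → r α β) ∧
  ∀ α β, r α β →
    ((Γ.TauStar α [] → Γ.TauStar β []) ∧
     (∀ α', Γ.Step Γ.tau α α' → ¬ r α α' →
        ∃ β'' β', RelChain (Γ.StepR R Γ.tau) r β (nf R β) β'' ∧
          Γ.StepR R Γ.tau β'' β' ∧ ¬ r β'' β' ∧ r α' β') ∧
     (∀ a, a ≠ Γ.tau → ∀ α', Γ.Step a α α' →
        ∃ β'' β', RelChain (Γ.StepR R Γ.tau) r β (nf R β) β'' ∧
          Γ.StepR R a β'' β' ∧ r α' β'))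

/-- `R`-bisimilarity `≃_R` : the largest `R`-bisimulation. -/
def RBisim (Γ : BPA C A) (R : Set C) (α β : List C) : Prop :=
  ∃ r, Γ.IsRBisim R r ∧ r α β

/-- `Id_R = {X ∈ C : X ≃_R ε}`. -/
def IdR (Γ : BPA C A) (R : Set C) : Set C := {X | Γ.RBisim R [X] []}

/-- `Rd_R(γ) = {X ∈ C : Xγ ≃_R γ}`. -/
def RdR (Γ : BPA C A) (R : Set C) (γ : List C) : Set C :=
  {X | Γ.RBisim R (X :: γ) γ}

/-- An admissible reference set: `R = Id_R`. -/
def Admissible (Γ : BPA C A) (R : Set C) : Prop := R = Γ.IdR R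

end BPA

/-! ### Auxiliary development -/

namespace BPA

open Relation List Classical

variable {C A : Type}

section ListFacts

variable {p : C → Bool}

theorem dw_append_all {l₁ l₂ : List C} (h : ∀ x ∈ l₁, p x = true) :
    (l₁ ++ l₂).dropWhile p = l₂.dropWhile p := by
  induction l₁ with
  | nil => rfl
  | cons a l ih =>
      rw [List.cons_append, List.dropWhile_cons, if_pos (h a List.mem_cons_self)]
      exact ih fun x hx => h x (List.mem_cons_of_mem _ hx)

theorem dw_append_ne {l₁ l₂ : List C} (h : l₁.dropWhile p ≠ []) :
    (l₁ ++ l₂).dropWhile p = l₁.dropWhile p ++ l₂ := by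
  induction l₁ with
  | nil => simp at h
  | cons a l ih =>
      by_cases hpa : p a = true
      · rw [List.dropWhile_cons, if_pos hpa] at h ⊢
        rw [List.cons_append, List.dropWhile_cons, if_pos hpa]
        exact ih h
      · rw [List.cons_append, List.dropWhile_cons, if_neg hpa,
          List.dropWhile_cons, if_neg hpa, List.cons_append]

theorem dw_idem (l : List C) : (l.dropWhile p).dropWhile p = l.dropWhile p := by
  induction l with
  | nil => rfl
  | cons a l ih =>
      by_cases hpa : p a = true
      · rw [List.dropWhile_cons, if_pos hpa]; exact ih
      · rw [List.dropWhile_cons, if_neg hpa, List.dropWhile_cons, if_neg hpa]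

theorem mem_takeWhile {l : List C} {x : C} (h : x ∈ l.takeWhile p) : p x = true := by
  induction l with
  | nil => simp [List.takeWhile] at h
  | cons a l ih =>
      by_cases hpa : p a = true
      · rw [List.takeWhile_cons, if_pos hpa] at h
        rcases List.mem_cons.1 h with rfl | h
        · exact hpa
        · exact ih h
      · rw [List.takeWhile_cons, if_neg hpa] at h; simp at h

end ListFacts

section NF

variable (R : Set C)

theorem nf_append_mem {ρ : List C} (h : ∀ X ∈ ρ, X ∈ R) (z : List C) :
    nf R (z ++ ρ) = nf R z := by
  unfold nf
  rw [List.reverse_append, dw_append_all]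
  intro x hx
  simpa using h x (List.mem_reverse.1 hx)

theorem nf_decomp (α : List C) :
    ∃ ρ, (∀ X ∈ ρ, X ∈ R) ∧ α = nf R α ++ ρ := by
  classical
  refine ⟨(α.reverse.takeWhile fun X => decide (X ∈ R)).reverse, ?_, ?_⟩
  · intro X hX
    have := mem_takeWhile (List.mem_reverse.1 hX)
    simpa using this
  · unfold nf
    rw [← List.reverse_append, List.takeWhile_append_dropWhile, List.reverse_reverse]

theorem nf_idem (α : List C) : nf R (nf R α) = nf R α := by
  unfold nf
  rw [List.reverse_reverse, dw_idem]

theorem nf_append_live {v : List C} (h : nf R v ≠ []) (z : List C) :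
    nf R (z ++ v) = z ++ nf R v := by
  unfold nf at h ⊢
  rw [List.reverse_append, dw_append_ne, List.reverse_append, List.reverse_reverse]
  intro hnil
  exact h (by rw [hnil]; rfl)

theorem nf_eq_nil_iff {α : List C} : nf R α = [] ↔ ∀ X ∈ α, X ∈ R := by
  classical
  unfold nf
  rw [List.reverse_eq_nil_iff, List.dropWhile_eq_nil_iff]
  constructor
  · intro h X hX
    simpa using h X (List.mem_reverse.2 hX)
  · intro h X hX
    simpa using h X (List.mem_reverse.1 hX)

theorem nf_append_nf (z u : List C) : nf R (z ++ nf R u) = nf R (z ++ u) := by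
  obtain ⟨ρ, hρ, hu⟩ := nf_decomp R u
  conv_rhs => rw [hu]
  rw [← List.append_assoc, nf_append_mem R hρ]

theorem REq_iff_nf_eq {α β : List C} : REq R α β ↔ nf R α = nf R β := by
  constructor
  · rintro ⟨ζ, a, b, rfl, rfl, ha, hb⟩
    rw [nf_append_mem R ha, nf_append_mem R hb]
  · intro h
    obtain ⟨ρa, hρa, ha⟩ := nf_decomp R α
    obtain ⟨ρb, hρb, hb⟩ := nf_decomp R β
    exact ⟨nf R α, ρa, ρb, ha, by rw [h]; exact hb, hρa, hρb⟩

theorem nf_head {z : List C} (h : nf R z ≠ []) :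
    ∃ X t σ, z = X :: (t ++ σ) ∧ nf R z = X :: t ∧ (∀ Y ∈ σ, Y ∈ R) := by
  obtain ⟨σ, hσ, hz⟩ := nf_decomp R z
  obtain ⟨X, t, ht⟩ := List.exists_cons_of_ne_nil h
  exact ⟨X, t, σ, by rw [hz, ht]; rfl, ht, hσ⟩

end NF

end BPA


namespace BPA

open Relation List Classical

variable {C A : Type}

section Steps

variable (Γ : BPA C A) (R : Set C)

theorem step_append {ℓ : A} {u v : List C} (h : Γ.Step ℓ u v) (w : List C) :
    Γ.Step ℓ (u ++ w) (v ++ w) := by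
  obtain ⟨X, κ, β, hr, rfl, rfl⟩ := h
  exact ⟨X, κ, β ++ w, hr, by simp, by simp⟩

theorem stepR_of_step {ℓ : A} {u v : List C} (h : Γ.Step ℓ u v) :
    Γ.StepR R ℓ (nf R u) (nf R v) := ⟨u, v, rfl, rfl, h⟩

theorem stepR_nf_right {ℓ : A} {u v : List C} (h : Γ.StepR R ℓ u v) :
    nf R v = v := by
  obtain ⟨a, b, _, rfl, _⟩ := h
  exact nf_idem R b

theorem tauStarR_nf {u v : List C} (hu : nf R u = u)
    (h : Γ.TauStarR R u v) : nf R v = v := by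
  induction h with
  | refl => exact hu
  | tail _ hstep _ => exact stepR_nf_right Γ R hstep

theorem tauStar_append {u v : List C} (h : Γ.TauStar u v) (w : List C) :
    Γ.TauStar (u ++ w) (v ++ w) :=
  ReflTransGen.lift (fun z => z ++ w) (fun _ _ hs => step_append Γ hs w) _ _ h

theorem tauStar_reify {u v : List C} (h : Γ.TauStar u v) :
    Γ.TauStarR R (nf R u) (nf R v) :=
  ReflTransGen.lift (nf R) (fun _ _ hs => stepR_of_step Γ R hs) _ _ h

/-- A prefix of a silently-terminating process silently terminates. -/
theorem tauStar_prefix : ∀ {w : List C}, Γ.TauStar w [] →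
    ∀ u v : List C, w = u ++ v → Γ.TauStar u [] := by
  intro w h
  induction h using Relation.ReflTransGen.head_induction_on with
  | refl =>
      intro u v huv
      obtain ⟨hu, -⟩ := List.append_eq_nil_iff.1 huv.symm
      rw [hu]
      exact ReflTransGen.refl
  | head hstep hrest ih =>
      intro u v huv
      subst huv
      match u with
      | [] => exact ReflTransGen.refl
      | X :: u₂ =>
          obtain ⟨X', κ, β, hr, heq, rfl⟩ := hstep
          rw [List.cons_append] at heq
          injection heq with h1 h2
          have : Γ.TauStar (κ ++ u₂) [] := ih (κ ++ u₂) v (by rw [← h2]; simp)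
          exact ReflTransGen.head ⟨X', κ, u₂, hr, by rw [h1], rfl⟩ this

/-- A suffix of a silently-terminating process silently terminates. -/
theorem tauStar_suffix : ∀ {w : List C}, Γ.TauStar w [] →
    ∀ u v : List C, w = u ++ v → Γ.TauStar v [] := by
  intro w h
  induction h using Relation.ReflTransGen.head_induction_on with
  | refl =>
      intro u v huv
      obtain ⟨-, hv⟩ := List.append_eq_nil_iff.1 huv.symm
      rw [hv]
      exact ReflTransGen.refl
  | head hstep hrest ih =>
      intro u v huv
      subst huv
      match u with
      | [] =>
          simp only [List.nil_append] at hstep ⊢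
          exact ReflTransGen.head hstep hrest
      | X :: u₂ =>
          obtain ⟨X', κ, β, hr, heq, rfl⟩ := hstep
          rw [List.cons_append] at heq
          injection heq with h1 h2
          exact ih (κ ++ u₂) v (by rw [← h2]; simp)

theorem tauStar_nil_append {u v : List C} (hu : Γ.TauStar u [])
    (hv : Γ.TauStar v []) : Γ.TauStar (u ++ v) [] := by
  have h1 : Γ.TauStar (u ++ v) v := by simpa using tauStar_append Γ hu v
  exact h1.trans hv

theorem tauStar_allR (hR : R ⊆ Γ.GroundC) :
    ∀ {ρ : List C}, (∀ X ∈ ρ, X ∈ R) → Γ.TauStar ρ [] := by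
  intro ρ
  induction ρ with
  | nil => intro _; exact ReflTransGen.refl
  | cons X ρ ih =>
      intro h
      have h1 : Γ.TauStar [X] [] := hR (h X List.mem_cons_self)
      have h2 : Γ.TauStar (X :: ρ) ρ := by simpa using tauStar_append Γ h1 ρ
      exact h2.trans (ih fun Y hY => h Y (List.mem_cons_of_mem _ hY))

theorem ground_nf_iff (hR : R ⊆ Γ.GroundC) (α : List C) :
    Γ.TauStar α [] ↔ Γ.TauStar (nf R α) [] := by
  obtain ⟨ρ, hρ, hα⟩ := nf_decomp R α
  constructor
  · intro h
    exact tauStar_prefix Γ (by rwa [← hα]) (nf R α) ρ rfl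
  · intro h
    rw [hα]
    exact tauStar_nil_append Γ h (tauStar_allR Γ R hR hρ)

end Steps

end BPA

namespace BPA

open Relation List Classical

variable {C A : Type}

section Semi

variable (Γ : BPA C A) (R : Set C)

/-- Semi (unanchored, unguarded, `nf`-saturated) transfer conditions at a pair. -/
def SemiAt (r : List C → List C → Prop) (x y : List C) : Prop :=
  (Γ.TauStar x [] → Γ.TauStar y []) ∧
  (∀ W x', nf R W = nf R x → Γ.Step Γ.tau W x' →
    ∃ y'', Γ.TauStarR R (nf R y) y'' ∧ r x y'' ∧
      ((∃ y', Γ.StepR R Γ.tau y'' y' ∧ r x' y') ∨ r x' y'')) ∧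
  (∀ a, a ≠ Γ.tau → ∀ W x', nf R W = nf R x → Γ.Step a W x' →
    ∃ y'' y', Γ.TauStarR R (nf R y) y'' ∧ r x y'' ∧ Γ.StepR R a y'' y' ∧ r x' y')

/-- A semi R-bisimulation. -/
def SemiCond (r : List C → List C → Prop) : Prop :=
  ∀ x y, r x y → SemiAt Γ R r x y

theorem semiAt_mono {r r' : List C → List C → Prop} (h : ∀ a b, r a b → r' a b)
    {x y : List C} (hxy : SemiAt Γ R r x y) : SemiAt Γ R r' x y := by
  obtain ⟨hg, ht, hv⟩ := hxy
  refine ⟨hg, ?_, ?_⟩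
  · intro W x' hW hst
    obtain ⟨y'', hch, hx, hor⟩ := ht W x' hW hst
    exact ⟨y'', hch, h _ _ hx, hor.imp
      (fun ⟨y', hs, hr⟩ => ⟨y', hs, h _ _ hr⟩) (h _ _)⟩
  · intro a ha W x' hW hst
    obtain ⟨y'', y', hch, hx, hs, hr⟩ := hv a ha W x' hW hst
    exact ⟨y'', y', hch, h _ _ hx, hs, h _ _ hr⟩

/-- The largest symmetric semi R-bisimulation. -/
def Nu (x y : List C) : Prop :=
  ∃ q, Symmetric q ∧ Γ.SemiCond R q ∧ q x y

theorem semiCond_nu : Γ.SemiCond R (Γ.Nu R) := by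
  rintro x y ⟨q, hsym, hsemi, hxy⟩
  exact semiAt_mono Γ R (fun a b hab => ⟨q, hsym, hsemi, hab⟩) (hsemi x y hxy)

theorem nu_symm {x y : List C} (h : Γ.Nu R x y) : Γ.Nu R y x := by
  obtain ⟨q, hsym, hsemi, hxy⟩ := h
  exact ⟨q, hsym, hsemi, hsym hxy⟩

/-- nf-equality as a relation. -/
def Qeq (x y : List C) : Prop := nf R x = nf R y

theorem semiCond_qeq (hR : R ⊆ Γ.GroundC) : Γ.SemiCond R (Qeq R) := by
  intro x y hxy
  refine ⟨?_, ?_, ?_⟩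
  · intro h
    rw [ground_nf_iff Γ R hR] at h ⊢
    rwa [← hxy]
  · intro W x' hW hst
    refine ⟨nf R y, ReflTransGen.refl, ?_, Or.inl ⟨nf R x', ⟨W, x', ?_, rfl, hst⟩, ?_⟩⟩
    · show nf R x = nf R (nf R y); rw [nf_idem]; exact hxy
    · rw [hW, hxy]
    · show nf R x' = nf R (nf R x'); rw [nf_idem]
  · intro a ha W x' hW hst
    refine ⟨nf R y, nf R x', ReflTransGen.refl, ?_, ⟨W, x', ?_, rfl, hst⟩, ?_⟩
    · show nf R x = nf R (nf R y); rw [nf_idem]; exact hxy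
    · rw [hW, hxy]
    · show nf R x' = nf R (nf R x'); rw [nf_idem]

end Semi

end BPA

namespace BPA

open Relation List Classical

variable {C A : Type}

section SemiComp

variable (Γ : BPA C A) (R : Set C)

/-- Weak simulation of `StepR`-τ-chains across a semi R-bisimulation. -/
theorem weak_sim {q : List C → List C → Prop} (hq : Γ.SemiCond R q)
    {x y : List C} (hxy : q x y) {ξ : List C}
    (hc : Γ.TauStarR R (nf R x) ξ) :
    ∃ Θ X Y, Γ.TauStarR R (nf R y) Θ ∧ nf R X = ξ ∧ nf R Y = Θ ∧ q X Y := by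
  induction hc with
  | refl => exact ⟨nf R y, x, y, ReflTransGen.refl, rfl, rfl, hxy⟩
  | tail hc' hstep ih =>
      obtain ⟨Θ, X, Y, hchΘ, hX, hY, hXY⟩ := ih
      obtain ⟨a, b, ha, hb, hab⟩ := hstep
      have hWX : nf R a = nf R X := by rw [hX, ← ha]
      obtain ⟨y'', hch, hXy'', hor⟩ := (hq X Y hXY).2.1 a b hWX hab
      have hy''nf : nf R y'' = y'' := tauStarR_nf Γ R (nf_idem R Y) hch
      rw [hY] at hch
      rcases hor with ⟨y', hst, hby'⟩ | hby''
      · exact ⟨y', b, y', (hchΘ.trans hch).tail hst, hb.symm,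
          stepR_nf_right Γ R hst, hby'⟩
      · exact ⟨y'', b, y'', hchΘ.trans hch, hb.symm, hy''nf, hby''⟩

/-- Composition of two semi R-bisimulations, with `nf`-joints. -/
def Comp (q₁ q₂ : List C → List C → Prop) (x z : List C) : Prop :=
  ∃ xh m m' zh, nf R xh = nf R x ∧ nf R zh = nf R z ∧
    q₁ xh m ∧ nf R m = nf R m' ∧ q₂ m' zh

theorem comp_intro {q₁ q₂ : List C → List C → Prop} {x y z : List C}
    (h1 : q₁ x y) (h2 : q₂ y z) : Comp R q₁ q₂ x z :=
  ⟨x, y, y, z, rfl, rfl, h1, rfl, h2⟩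

theorem comp_flip {q₁ q₂ : List C → List C → Prop}
    (h1 : Symmetric q₁) (h2 : Symmetric q₂) {x z : List C}
    (h : Comp R q₁ q₂ x z) : Comp R q₂ q₁ z x := by
  obtain ⟨xh, m, m', zh, hx, hz, hq1, hmm, hq2⟩ := h
  exact ⟨zh, m', m, xh, hz, hx, h2 hq2, hmm.symm, h1 hq1⟩

theorem semiCond_comp (hR : R ⊆ Γ.GroundC) {q₁ q₂ : List C → List C → Prop}
    (hq₁ : Γ.SemiCond R q₁) (hq₂ : Γ.SemiCond R q₂) :
    Γ.SemiCond R (Comp R q₁ q₂) := by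
  rintro x z ⟨xh, m, m', zh, hx, hz, h1, hmm, h2⟩
  refine ⟨?_, ?_, ?_⟩
  · -- ground condition
    intro hg
    have e := ground_nf_iff Γ R hR
    have g1 : Γ.TauStar xh [] := (e xh).2 (by rw [hx]; exact (e x).1 hg)
    have g2 := (hq₁ xh m h1).1 g1
    have g3 : Γ.TauStar m' [] := (e m').2 (by rw [← hmm]; exact (e m).1 g2)
    have g4 := (hq₂ m' zh h2).1 g3
    exact (e z).2 (by rw [← hz]; exact (e zh).1 g4)
  · -- tau condition
    intro W x' hW hst
    obtain ⟨m₁, hch₁, hxm₁, hor₁⟩ :=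
      (hq₁ xh m h1).2.1 W x' (by rw [hW, ← hx]) hst
    rw [hmm] at hch₁
    obtain ⟨Θ, XX, YY, hchΘ, hXX, hYY, hq2'⟩ := weak_sim Γ R hq₂ h2 hch₁
    rw [hz] at hchΘ
    have hΘnf : nf R Θ = Θ := by
      rw [← hYY, nf_idem]
    rcases hor₁ with ⟨m₂, hstep, hx'm₂⟩ | hx'm₁
    · -- q₁ answered with a real R-step m₁ → m₂
      obtain ⟨Aw, Bw, hA, hB, hABstep⟩ := hstep
      obtain ⟨z₁, hchz, hXz₁, hor₂⟩ :=
        (hq₂ XX YY hq2').2.1 Aw Bw (by rw [← hA, hXX]) hABstep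
      have hz₁nf : nf R z₁ = z₁ := tauStarR_nf Γ R (nf_idem R YY) hchz
      rw [hYY] at hchz
      have hjm : nf R m₁ = nf R XX := by rw [← hXX, nf_idem]
      have hjB : nf R m₂ = nf R Bw := by rw [hB, nf_idem]
      have hcomp1 : Comp R q₁ q₂ x z₁ :=
        ⟨xh, m₁, XX, z₁, hx, rfl, hxm₁, hjm, hXz₁⟩
      rcases hor₂ with ⟨z₂, hstz, hBz₂⟩ | hBz₁
      · exact ⟨z₁, hchΘ.trans hchz, hcomp1,
          Or.inl ⟨z₂, hstz, ⟨x', m₂, Bw, z₂, rfl, rfl, hx'm₂, hjB, hBz₂⟩⟩⟩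
      · exact ⟨z₁, hchΘ.trans hchz, hcomp1,
          Or.inr ⟨x', m₂, Bw, z₁, rfl, rfl, hx'm₂, hjB, hBz₁⟩⟩
    · -- q₁ stayed
      have hjm : nf R m₁ = nf R XX := by rw [← hXX, nf_idem]
      have hjY : nf R YY = nf R Θ := by rw [← hYY, nf_idem]
      exact ⟨Θ, hchΘ, ⟨xh, m₁, XX, YY, hx, hjY, hxm₁, hjm, hq2'⟩,
        Or.inr ⟨x', m₁, XX, YY, rfl, hjY, hx'm₁, hjm, hq2'⟩⟩
  · -- visible condition
    intro a ha W x' hW hst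
    obtain ⟨m₁, m₂, hch₁, hxm₁, hstep, hx'm₂⟩ :=
      (hq₁ xh m h1).2.2 a ha W x' (by rw [hW, ← hx]) hst
    rw [hmm] at hch₁
    obtain ⟨Θ, XX, YY, hchΘ, hXX, hYY, hq2'⟩ := weak_sim Γ R hq₂ h2 hch₁
    rw [hz] at hchΘ
    obtain ⟨Aw, Bw, hA, hB, hABstep⟩ := hstep
    obtain ⟨z₁, z₂, hchz, hXz₁, hstz, hBz₂⟩ :=
      (hq₂ XX YY hq2').2.2 a ha Aw Bw (by rw [← hA, hXX]) hABstep
    have hz₁nf : nf R z₁ = z₁ := tauStarR_nf Γ R (nf_idem R YY) hchz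
    rw [hYY] at hchz
    have hjm : nf R m₁ = nf R XX := by rw [← hXX, nf_idem]
    have hjB : nf R m₂ = nf R Bw := by rw [hB, nf_idem]
    exact ⟨z₁, z₂, hchΘ.trans hchz,
      ⟨xh, m₁, XX, z₁, hx, rfl, hxm₁, hjm, hXz₁⟩, hstz,
      ⟨x', m₂, Bw, z₂, rfl, rfl, hx'm₂, hjB, hBz₂⟩⟩

end SemiComp

end BPA

namespace BPA

open Relation List Classical

variable {C A : Type}

section NuFacts

variable (Γ : BPA C A) (R : Set C)

theorem qeq_symm : Symmetric (Qeq (C := C) R) := fun _ _ h => h.symm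

theorem nu_of_nf_eq (hR : R ⊆ Γ.GroundC) {x y : List C}
    (h : nf R x = nf R y) : Γ.Nu R x y :=
  ⟨Qeq R, qeq_symm R, semiCond_qeq Γ R hR, h⟩

theorem nu_refl (hR : R ⊆ Γ.GroundC) (x : List C) : Γ.Nu R x x :=
  nu_of_nf_eq Γ R hR rfl

theorem nu_trans (hR : R ⊆ Γ.GroundC) {x y z : List C}
    (h1 : Γ.Nu R x y) (h2 : Γ.Nu R y z) : Γ.Nu R x z := by
  obtain ⟨q₁, hs₁, hc₁, hxy⟩ := h1
  obtain ⟨q₂, hs₂, hc₂, hyz⟩ := h2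
  refine ⟨fun a b => Comp R q₁ q₂ a b ∨ Comp R q₂ q₁ a b, ?_, ?_, 
    Or.inl (comp_intro R hxy hyz)⟩
  · intro a b hab
    rcases hab with h | h
    · exact Or.inr (comp_flip R hs₁ hs₂ h)
    · exact Or.inl (comp_flip R hs₂ hs₁ h)
  · intro a b hab
    rcases hab with h | h
    · exact semiAt_mono Γ R (fun _ _ => Or.inl)
        (semiCond_comp Γ R hR hc₁ hc₂ a b h)
    · exact semiAt_mono Γ R (fun _ _ => Or.inr)
        (semiCond_comp Γ R hR hc₂ hc₁ a b h)

theorem nu_equivalence (hR : R ⊆ Γ.GroundC) : Equivalence (Γ.Nu R) :=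
  ⟨nu_refl Γ R hR, fun h => nu_symm Γ R h, fun h1 h2 => nu_trans Γ R hR h1 h2⟩

/-- The ground condition propagates backwards along `StepR` τ-chains. -/
theorem ground_back {u v : List C} (h : Γ.StepR R Γ.tau u v)
    (hR : R ⊆ Γ.GroundC) (hv : Γ.TauStar v []) : Γ.TauStar u [] := by
  obtain ⟨a, b, rfl, rfl, hab⟩ := h
  have hb : Γ.TauStar b [] := (ground_nf_iff Γ R hR b).2 hv
  have ha : Γ.TauStar a [] := ReflTransGen.head hab hb
  exact (ground_nf_iff Γ R hR a).1 ha

theorem ground_back_star {u v : List C} (h : Γ.TauStarR R u v)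
    (hR : R ⊆ Γ.GroundC) (hv : Γ.TauStar v []) : Γ.TauStar u [] := by
  induction h using Relation.ReflTransGen.head_induction_on with
  | refl => exact hv
  | head hstep _ ih => exact ground_back Γ R hstep hR ih

/-- Stuttering: any state on a τ-R-chain between ν-related normal forms is
ν-related to the start. -/
theorem nu_stutter (hR : R ⊆ Γ.GroundC) {η ξ : List C}
    (hη : nf R η = η) (hξ : nf R ξ = ξ) (hν : Γ.Nu R η ξ)
    {z : List C} (h1 : Γ.TauStarR R η z) (h2 : Γ.TauStarR R z ξ) :
    Γ.Nu R η z := by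
  set qst : List C → List C → Prop := fun a b =>
    Γ.Nu R a b ∨ ((Γ.TauStarR R η a ∧ Γ.TauStarR R a ξ) ∧
                  (Γ.TauStarR R η b ∧ Γ.TauStarR R b ξ)) with hqst
  have hsym : Symmetric qst := by
    intro a b hab
    rcases hab with h | ⟨ha, hb⟩
    · exact Or.inl (nu_symm Γ R h)
    · exact Or.inr ⟨hb, ha⟩
  have hcond : Γ.SemiCond R qst := by
    intro u w huw
    rcases huw with h | ⟨⟨hηu, huξ⟩, ⟨hηw, hwξ⟩⟩
    · exact semiAt_mono Γ R (fun _ _ => Or.inl) (semiCond_nu Γ R u w h)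
    · have hun : nf R u = u := tauStarR_nf Γ R hη hηu
      have hwn : nf R w = w := tauStarR_nf Γ R hη hηw
      refine ⟨?_, ?_, ?_⟩
      · -- ground
        intro hg
        have hgη : Γ.TauStar η [] := ground_back_star Γ R hηu hR hg
        have hgξ : Γ.TauStar ξ [] := (semiCond_nu Γ R η ξ hν).1 hgη
        exact ground_back_star Γ R hwξ hR hgξ
      · -- tau
        intro W x' hW hst
        -- simulate the chain η ⟹R u across ν η ξ
        have hchain : Γ.TauStarR R (nf R η) u := by rw [hη]; exact hηu
        obtain ⟨Θ, X, Y, hchΘ, hX, hY, hXY⟩ :=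
          weak_sim Γ R (semiCond_nu Γ R) hν hchain
        have hWX : nf R W = nf R X := by rw [hW, hun, ← hX]
        obtain ⟨y'', hch, hXy'', hor⟩ :=
          (semiCond_nu Γ R X Y hXY).2.1 W x' hWX hst
        rw [hY] at hch
        rw [hξ] at hchΘ
        have hbig : Γ.TauStarR R (nf R w) y'' := by
          rw [hwn]; exact (hwξ.trans hchΘ).trans hch
        have hbase : Γ.Nu R u y'' := by
          refine nu_trans Γ R hR ?_ hXy''
          exact nu_of_nf_eq Γ R hR (by rw [hX, hun])
        rcases hor with ⟨y', hs, hr⟩ | hr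
        · refine ⟨y'', hbig, Or.inl hbase, Or.inl ⟨y', hs, Or.inl ?_⟩⟩
          have : Γ.Nu R x' x' := nu_refl Γ R hR x'
          exact hr
        · exact ⟨y'', hbig, Or.inl hbase, Or.inr (Or.inl hr)⟩
      · -- visible
        intro a ha W x' hW hst
        have hchain : Γ.TauStarR R (nf R η) u := by rw [hη]; exact hηu
        obtain ⟨Θ, X, Y, hchΘ, hX, hY, hXY⟩ :=
          weak_sim Γ R (semiCond_nu Γ R) hν hchain
        have hWX : nf R W = nf R X := by rw [hW, hun, ← hX]
        obtain ⟨y'', y', hch, hXy'', hs, hr⟩ :=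
          (semiCond_nu Γ R X Y hXY).2.2 a ha W x' hWX hst
        rw [hY] at hch
        rw [hξ] at hchΘ
        have hbig : Γ.TauStarR R (nf R w) y'' := by
          rw [hwn]; exact (hwξ.trans hchΘ).trans hch
        have hbase : Γ.Nu R u y'' := by
          refine nu_trans Γ R hR ?_ hXy''
          exact nu_of_nf_eq Γ R hR (by rw [hX, hun])
        exact ⟨y'', y', hbig, Or.inl hbase, hs, Or.inl hr⟩
  have hpair : qst η z :=
    Or.inr ⟨⟨ReflTransGen.refl, h1.trans h2⟩, ⟨h1, h2⟩⟩
  exact ⟨qst, hsym, hcond, hpair⟩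

end NuFacts

end BPA

namespace BPA

open Relation List Classical

variable {C A : Type}

section NuRBisim

variable (Γ : BPA C A) (R : Set C)

theorem nu_nf_left (hR : R ⊆ Γ.GroundC) (β : List C) : Γ.Nu R β (nf R β) :=
  nu_of_nf_eq Γ R hR (nf_idem R β).symm

/-- Rebuild an anchored chain from a plain chain between ν-related normal
forms, using the stuttering lemma. -/
theorem anchored_chain (hR : R ⊆ Γ.GroundC) {β Y : List C}
    (hch : Γ.TauStarR R (nf R β) Y) (hν : Γ.Nu R (nf R β) Y) :
    RelChain (Γ.StepR R Γ.tau) (Γ.Nu R) β (nf R β) Y := by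
  have hYnf : nf R Y = Y := tauStarR_nf Γ R (nf_idem R β) hch
  have key : ∀ z, Γ.TauStarR R (nf R β) z → Γ.TauStarR R z Y →
      RelChain (Γ.StepR R Γ.tau) (Γ.Nu R) β (nf R β) z := by
    intro z h1 hsuf
    induction h1 with
    | refl => exact ReflTransGen.refl
    | @tail b z' h1' st ih =>
        have hb : Γ.TauStarR R b Y := ReflTransGen.head st hsuf
        have hmid : Γ.Nu R (nf R β) z' :=
          nu_stutter Γ R hR (nf_idem R β) hYnf hν (h1'.tail st) hsuf
        exact (ih hb).tail ⟨st, nu_trans Γ R hR (nu_nf_left Γ R hR β) hmid⟩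
  exact key Y hch ReflTransGen.refl

/-- ν is an R-bisimulation. -/
theorem isRBisim_nu (hR : R ⊆ Γ.GroundC) : Γ.IsRBisim R (Γ.Nu R) := by
  refine ⟨nu_equivalence Γ R hR, ?_, ?_⟩
  · intro α β h
    exact nu_of_nf_eq Γ R hR ((REq_iff_nf_eq R).1 h)
  · intro α β hαβ
    refine ⟨(semiCond_nu Γ R α β hαβ).1, ?_, ?_⟩
    · -- tau clause
      intro α' hst hguard
      obtain ⟨y'', hch, hαy'', hor⟩ :=
        (semiCond_nu Γ R α β hαβ).2.1 α α' rfl hst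
      rcases hor with ⟨y', hsR, hα'y'⟩ | hstay
      · have hνy'' : Γ.Nu R (nf R β) y'' :=
          nu_trans Γ R hR (nu_trans Γ R hR
            (nu_symm Γ R (nu_nf_left Γ R hR β)) (nu_symm Γ R hαβ)) hαy''
        have hguard' : ¬ Γ.Nu R y'' y' := by
          intro hcon
          exact hguard (nu_trans Γ R hR hαy''
            (nu_trans Γ R hR hcon (nu_symm Γ R hα'y')))
        exact ⟨y'', y', anchored_chain Γ R hR hch hνy'', hsR, hguard', hα'y'⟩
      · exact absurd (nu_trans Γ R hR hαy'' (nu_symm Γ R hstay)) hguard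
    · -- visible clause
      intro a ha α' hst
      obtain ⟨y'', y', hch, hαy'', hsR, hα'y'⟩ :=
        (semiCond_nu Γ R α β hαβ).2.2 a ha α α' rfl hst
      have hνy'' : Γ.Nu R (nf R β) y'' :=
        nu_trans Γ R hR (nu_trans Γ R hR
          (nu_symm Γ R (nu_nf_left Γ R hR β)) (nu_symm Γ R hαβ)) hαy''
      exact ⟨y'', y', anchored_chain Γ R hR hch hνy'', hsR, hα'y'⟩

end NuRBisim

end BPA

namespace BPA

open Relation List Classical

variable {C A : Type}

section Helpers

variable (Γ : BPA C A) (R : Set C)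

theorem nf_nil : nf R ([] : List C) = [] := rfl

theorem relChain_to_star {st r : List C → List C → Prop} {anchor x y : List C}
    (h : RelChain st r anchor x y) : ReflTransGen st x y :=
  ReflTransGen.mono (r := fun x y => st x y ∧ r anchor y) (fun _ _ h => h.1) _ _ h

theorem relChain_anchor {st r : List C → List C → Prop} {anchor x y : List C}
    (h : RelChain st r anchor x y) : y = x ∨ r anchor y := by
  induction h with
  | refl => exact Or.inl rfl
  | tail _ hstep _ => exact Or.inr hstep.2

/-- Mirroring lemma: if `nf (X::p₂ ++ w) ≠ []` then it starts with `X` and the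
result of rewriting the head is insensitive to the `w`-dressing. -/
theorem head_mirror {X : C} (p₂ w : List C) (h : nf R (X :: p₂ ++ w) ≠ []) :
    ∃ t, nf R (X :: p₂ ++ w) = X :: t ∧
      ∀ κ : List C, nf R (κ ++ t) = nf R ((κ ++ p₂) ++ w) := by
  by_cases hw : nf R w = []
  · have hwall : ∀ Y ∈ w, Y ∈ R := (nf_eq_nil_iff R).1 hw
    have h1 : nf R (X :: p₂ ++ w) = nf R (X :: p₂) := by
      have : X :: p₂ ++ w = (X :: p₂) ++ w := by simp
      rw [this, nf_append_mem R hwall]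
    rw [h1] at h
    obtain ⟨X', t, σ, hdec, hnf, hσ⟩ := nf_head R h
    injection hdec with hX hrest
    subst hX
    refine ⟨t, by rw [h1, hnf], ?_⟩
    intro κ
    have heq2 : (κ ++ p₂) ++ w = (κ ++ t) ++ (σ ++ w) := by
      rw [hrest]; simp
    have hmem : ∀ Y ∈ σ ++ w, Y ∈ R := by
      intro Y hY
      rcases List.mem_append.1 hY with h' | h'
      · exact hσ Y h'
      · exact hwall Y h'
    rw [heq2, nf_append_mem R hmem]
  · have h1 : nf R (X :: p₂ ++ w) = X :: (p₂ ++ nf R w) := by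
      have : X :: p₂ ++ w = (X :: p₂) ++ w := by simp
      rw [this, nf_append_live R hw]; simp
    refine ⟨p₂ ++ nf R w, h1, ?_⟩
    intro κ
    have : κ ++ (p₂ ++ nf R w) = (κ ++ p₂) ++ nf R w := by simp
    rw [this, nf_append_nf]

end Helpers

end BPA

namespace BPA

open Relation List Classical

variable {C A : Type}

section Qmix

variable (Γ : BPA C A) (R : Set C) (s : List C → List C → Prop)

/-- Common prefix with `s`-related tails (up to `nf`). -/
def Qmix (x y : List C) : Prop :=
  ∃ p u v, nf R x = nf R (p ++ u) ∧ nf R y = nf R (p ++ v) ∧ s u v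

theorem qmix_symm (hsym : Symmetric s) : Symmetric (Qmix R s) := by
  rintro x y ⟨p, u, v, hx, hy, huv⟩
  exact ⟨p, v, u, hy, hx, hsym huv⟩

theorem semiCond_qmix (hR : R ⊆ Γ.GroundC) (hs : Γ.IsRBisim R s) :
    Γ.SemiCond R (Qmix R s) := by
  obtain ⟨heq, hreq, hcond⟩ := hs
  have sOf : ∀ {a b : List C}, nf R a = nf R b → s a b :=
    fun h => hreq _ _ ((REq_iff_nf_eq R).2 h)
  rintro x y ⟨p, u, v, hx, hy, huv⟩
  have e := ground_nf_iff Γ R hR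
  refine ⟨?_, ?_, ?_⟩
  · -- ground condition
    intro hg
    have h1 : Γ.TauStar (p ++ u) [] := (e _).2 (by rw [← hx]; exact (e x).1 hg)
    have hpg : Γ.TauStar p [] := tauStar_prefix Γ h1 p u rfl
    have hug : Γ.TauStar u [] := tauStar_suffix Γ h1 p u rfl
    have hvg : Γ.TauStar v [] := (hcond u v huv).1 hug
    exact (e y).2 (by rw [hy]; exact (e _).1 (tauStar_nil_append Γ hpg hvg))
  · -- tau condition
    intro W x' hW hst
    by_cases hp : p = []
    · -- pure s case
      subst hp
      simp only [List.nil_append] at hx hy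
      have hWv : s W v := heq.trans (heq.trans (sOf (hW.trans hx)) huv)
        (heq.refl v)
      by_cases hvis : s W x'
      · -- stay
        refine ⟨nf R y, ReflTransGen.refl,
          ⟨[], u, v, by simpa using hx, by rw [nf_idem]; simpa using hy, huv⟩,
          Or.inr ⟨[], x', v, by simp, by rw [nf_idem]; simpa using hy,
            heq.trans (heq.symm hvis) hWv⟩⟩
      · -- s answers with a move
        obtain ⟨β'', β', hrc, hstep, _, hrel⟩ := (hcond W v hWv).2.1 x' hst hvis
        have hplain : Γ.TauStarR R (nf R v) β'' := relChain_to_star hrc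
        have hβnf : nf R β'' = β'' := tauStarR_nf Γ R (nf_idem R v) hplain
        have hvβ : s v β'' := by
          rcases relChain_anchor hrc with rfl | h'
          · exact sOf (nf_idem R v).symm
          · exact h'
        refine ⟨β'', by rw [hy]; exact hplain,
          ⟨[], u, β'', by simpa using hx, by simp [nf_idem, hβnf], heq.trans huv hvβ⟩,
          Or.inl ⟨β', hstep,
            ⟨[], x', β', by simp, by simp [nf_idem, stepR_nf_right Γ R hstep], hrel⟩⟩⟩
    · obtain ⟨X, p₂, rfl⟩ := List.exists_cons_of_ne_nil hp
      by_cases hnx : nf R x = []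
      · -- dead prefix: descend the prefix on the `y` side, then use `s`
        have hpu : nf R (X :: p₂ ++ u) = [] := by rw [← hx]; exact hnx
        have hall := (nf_eq_nil_iff R).1 hpu
        have hpall : ∀ Y ∈ X :: p₂, Y ∈ R := by
          intro Y hY
          refine hall Y ?_
          simp only [List.cons_append, List.mem_cons, List.mem_append] at hY ⊢
          tauto
        have huall : ∀ Y ∈ u, Y ∈ R := by
          intro Y hY
          refine hall Y ?_
          simp only [List.cons_append, List.mem_cons, List.mem_append]
          tauto
        have hnu : nf R u = [] := (nf_eq_nil_iff R).2 huall
        have hdesc : Γ.TauStar ((X :: p₂) ++ v) v := by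
          simpa using tauStar_append Γ (tauStar_allR Γ R hR hpall) v
        have rchain : Γ.TauStarR R (nf R y) (nf R v) := by
          rw [hy]
          exact tauStar_reify Γ R hdesc
        have hWall : ∀ Y ∈ W, Y ∈ R := (nf_eq_nil_iff R).1 (hW.trans hnx)
        have hWv : s W v := by
          have h1 : s W u := sOf (by rw [(nf_eq_nil_iff R).2 hWall, hnu])
          exact heq.trans h1 huv
        by_cases hvis : s W x'
        · -- stay (after descending)
          refine ⟨nf R v, rchain,
            ⟨[], u, v, by simp [hnx, hnu], by simp [nf_idem], huv⟩,
            Or.inr ⟨[], x', v, by simp, by simp [nf_idem],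
              heq.trans (heq.symm hvis) hWv⟩⟩
        · obtain ⟨β'', β', hrc, hstep, _, hrel⟩ := (hcond W v hWv).2.1 x' hst hvis
          have hplain : Γ.TauStarR R (nf R v) β'' := relChain_to_star hrc
          have hβnf : nf R β'' = β'' := tauStarR_nf Γ R (nf_idem R v) hplain
          have hvβ : s v β'' := by
            rcases relChain_anchor hrc with rfl | h'
            · exact sOf (nf_idem R v).symm
            · exact h'
          refine ⟨β'', rchain.trans hplain,
            ⟨[], u, β'', by simp [hnx, hnu], by simp [nf_idem, hβnf],
              heq.trans huv hvβ⟩,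
            Or.inl ⟨β', hstep,
              ⟨[], x', β', by simp, by simp [nf_idem, stepR_nf_right Γ R hstep],
                hrel⟩⟩⟩
      · -- live prefix: mirror the step
        have hne : nf R (X :: p₂ ++ u) ≠ [] := by rw [← hx]; exact hnx
        obtain ⟨t, hhd, hκ⟩ := head_mirror R p₂ u hne
        obtain ⟨ρ, hρ, hWdec⟩ := nf_decomp R W
        have hWform : W = X :: (t ++ ρ) := by
          rw [hWdec, hW, hx, hhd]; rfl
        obtain ⟨X', κ, βW, hrule, hWeq, hx'eq⟩ := hst
        rw [hWform] at hWeq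
        injection hWeq with hX hβW
        subst hX
        have hx'form : x' = κ ++ (t ++ ρ) := by rw [hx'eq, ← hβW]
        have hmir : Γ.Step Γ.tau (X :: (p₂ ++ v)) (κ ++ (p₂ ++ v)) :=
          ⟨X, κ, p₂ ++ v, hrule, rfl, rfl⟩
        have hnfx' : nf R x' = nf R ((κ ++ p₂) ++ u) := by
          rw [hx'form, ← List.append_assoc, nf_append_mem R hρ, hκ]
        refine ⟨nf R y, ReflTransGen.refl,
          ⟨X :: p₂, u, v, hx, by rw [nf_idem]; exact hy, huv⟩,
          Or.inl ⟨nf R (κ ++ (p₂ ++ v)),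
            ⟨X :: (p₂ ++ v), κ ++ (p₂ ++ v), ?_, rfl, hmir⟩,
            ⟨κ ++ p₂, u, v, hnfx', by rw [nf_idem, List.append_assoc], huv⟩⟩⟩
        rw [hy]; rfl
  · -- visible condition
    intro a ha W x' hW hst
    by_cases hp : p = []
    · subst hp
      simp only [List.nil_append] at hx hy
      have hWv : s W v := heq.trans (sOf (hW.trans hx)) huv
      obtain ⟨β'', β', hrc, hstep, hrel⟩ := (hcond W v hWv).2.2 a ha x' hst
      have hplain : Γ.TauStarR R (nf R v) β'' := relChain_to_star hrc
      have hβnf : nf R β'' = β'' := tauStarR_nf Γ R (nf_idem R v) hplain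
      have hvβ : s v β'' := by
        rcases relChain_anchor hrc with rfl | h'
        · exact sOf (nf_idem R v).symm
        · exact h'
      exact ⟨β'', β', by rw [hy]; exact hplain,
        ⟨[], u, β'', by simpa using hx, by simp [nf_idem, hβnf], heq.trans huv hvβ⟩,
        hstep,
        ⟨[], x', β', by simp, by simp [nf_idem, stepR_nf_right Γ R hstep], hrel⟩⟩
    · obtain ⟨X, p₂, rfl⟩ := List.exists_cons_of_ne_nil hp
      by_cases hnx : nf R x = []
      · have hpu : nf R (X :: p₂ ++ u) = [] := by rw [← hx]; exact hnx
        have hall := (nf_eq_nil_iff R).1 hpu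
        have hpall : ∀ Y ∈ X :: p₂, Y ∈ R := by
          intro Y hY
          refine hall Y ?_
          simp only [List.cons_append, List.mem_cons, List.mem_append] at hY ⊢
          tauto
        have huall : ∀ Y ∈ u, Y ∈ R := by
          intro Y hY
          refine hall Y ?_
          simp only [List.cons_append, List.mem_cons, List.mem_append]
          tauto
        have hnu : nf R u = [] := (nf_eq_nil_iff R).2 huall
        have hdesc : Γ.TauStar ((X :: p₂) ++ v) v := by
          simpa using tauStar_append Γ (tauStar_allR Γ R hR hpall) v
        have rchain : Γ.TauStarR R (nf R y) (nf R v) := by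
          rw [hy]
          exact tauStar_reify Γ R hdesc
        have hWall : ∀ Y ∈ W, Y ∈ R := (nf_eq_nil_iff R).1 (hW.trans hnx)
        have hWv : s W v := by
          have h1 : s W u := sOf (by rw [(nf_eq_nil_iff R).2 hWall, hnu])
          exact heq.trans h1 huv
        obtain ⟨β'', β', hrc, hstep, hrel⟩ := (hcond W v hWv).2.2 a ha x' hst
        have hplain : Γ.TauStarR R (nf R v) β'' := relChain_to_star hrc
        have hβnf : nf R β'' = β'' := tauStarR_nf Γ R (nf_idem R v) hplain
        have hvβ : s v β'' := by
          rcases relChain_anchor hrc with rfl | h'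
          · exact sOf (nf_idem R v).symm
          · exact h'
        exact ⟨β'', β', rchain.trans hplain,
          ⟨[], u, β'', by simp [hnx, hnu], by simp [nf_idem, hβnf],
            heq.trans huv hvβ⟩,
          hstep,
          ⟨[], x', β', by simp, by simp [nf_idem, stepR_nf_right Γ R hstep],
            hrel⟩⟩
      · have hne : nf R (X :: p₂ ++ u) ≠ [] := by rw [← hx]; exact hnx
        obtain ⟨t, hhd, hκ⟩ := head_mirror R p₂ u hne
        obtain ⟨ρ, hρ, hWdec⟩ := nf_decomp R W
        have hWform : W = X :: (t ++ ρ) := by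
          rw [hWdec, hW, hx, hhd]; rfl
        obtain ⟨X', κ, βW, hrule, hWeq, hx'eq⟩ := hst
        rw [hWform] at hWeq
        injection hWeq with hX hβW
        subst hX
        have hx'form : x' = κ ++ (t ++ ρ) := by rw [hx'eq, ← hβW]
        have hmir : Γ.Step a (X :: (p₂ ++ v)) (κ ++ (p₂ ++ v)) :=
          ⟨X, κ, p₂ ++ v, hrule, rfl, rfl⟩
        have hnfx' : nf R x' = nf R ((κ ++ p₂) ++ u) := by
          rw [hx'form, ← List.append_assoc, nf_append_mem R hρ, hκ]
        refine ⟨nf R y, nf R (κ ++ (p₂ ++ v)), ReflTransGen.refl,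
          ⟨X :: p₂, u, v, hx, by rw [nf_idem]; exact hy, huv⟩,
          ⟨X :: (p₂ ++ v), κ ++ (p₂ ++ v), ?_, rfl, hmir⟩,
          ⟨κ ++ p₂, u, v, hnfx', by rw [nf_idem, List.append_assoc], huv⟩⟩
        rw [hy]; rfl

end Qmix

end BPA

namespace BPA

open Relation List Classical

variable {C A : Type}

section Bfacts

variable (Γ : BPA C A)

theorem step_nil {ℓ : A} {z : List C} : ¬ Γ.Step ℓ [] z := by
  rintro ⟨X, κ, β, _, h, _⟩
  cases h

theorem relChain_nil {r : List C → List C → Prop} {anchor β'' : List C}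
    (h : RelChain (Γ.Step Γ.tau) r anchor [] β'') : β'' = [] := by
  induction h with
  | refl => rfl
  | tail hc hstep ih =>
      subst ih
      exact absurd hstep.1 (step_nil Γ)

theorem normedProc_all (hΓ : Γ.Normed) : ∀ w : List C, Γ.NormedProc w := by
  intro w
  induction w with
  | nil => exact ReflTransGen.refl
  | cons X w ih =>
      have h1 : ReflTransGen Γ.AnyStep [X] [] := hΓ X
      have h2 : ReflTransGen Γ.AnyStep (X :: w) w := by
        have := ReflTransGen.lift (r := Γ.AnyStep) (p := Γ.AnyStep) (fun z => z ++ w)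
          (fun a b hab => hab.elim fun ℓ h => ⟨ℓ, step_append Γ h w⟩) _ _ h1
        simpa [Function.onFun] using this
      exact h2.trans ih

/-- A process branching-bisimilar to `ε` terminates silently. -/
theorem b_nil_ground (hΓ : Γ.Normed) {b : List C → List C → Prop}
    (hb : Γ.IsBranchingBisim b) (d : List C) (hd : b [] d) :
    Γ.TauStar d [] := by
  have hn := normedProc_all Γ hΓ d
  revert hd
  induction hn using Relation.ReflTransGen.head_induction_on with
  | refl => intro _; exact ReflTransGen.refl
  | @head a c hstep hrest ih =>
      intro hbd
      obtain ⟨ℓ, hs⟩ := hstep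
      have hba : b a [] := hb.1.symm hbd
      by_cases hℓ : ℓ = Γ.tau
      · subst hℓ
        by_cases hinv : b a c
        · exact ReflTransGen.head hs (ih (hb.1.trans hbd hinv))
        · obtain ⟨β'', β', hrc, hstep', _, _⟩ := (hb.2 a [] hba).2 c hs hinv
          have hnil : β'' = [] := relChain_nil Γ hrc
          subst hnil
          exact absurd hstep' (step_nil Γ)
      · obtain ⟨β'', β', hrc, hstep', _⟩ := (hb.2 a [] hba).1 ℓ hℓ c hs
        have hnil : β'' = [] := relChain_nil Γ hrc
        subst hnil
        exact absurd hstep' (step_nil Γ)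

/-- Weak simulation of silent termination across a branching bisimulation. -/
theorem b_sim_ground {b : List C → List C → Prop}
    (hb : Γ.IsBranchingBisim b) :
    ∀ {p : List C}, Γ.TauStar p [] → ∀ q, b p q →
      ∃ q', Γ.TauStar q q' ∧ b [] q' := by
  intro p h
  induction h using Relation.ReflTransGen.head_induction_on with
  | refl => intro q hq; exact ⟨q, ReflTransGen.refl, hq⟩
  | @head a c hstep hrest ih =>
      intro q hq
      by_cases hinv : b a c
      · exact ih q (hb.1.trans (hb.1.symm hinv) hq)
      · obtain ⟨β'', β', hrc, hstep', _, hrel⟩ := (hb.2 a q hq).2 c hstep hinv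
        have hqβ : Γ.TauStar q β' :=
          (relChain_to_star hrc).tail hstep'
        obtain ⟨q', hc, hb'⟩ := ih β' hrel
        exact ⟨q', hqβ.trans hc, hb'⟩

theorem b_ground (hΓ : Γ.Normed) {b : List C → List C → Prop}
    (hb : Γ.IsBranchingBisim b) {p q : List C} (hpq : b p q)
    (hp : Γ.TauStar p []) : Γ.TauStar q [] := by
  obtain ⟨q', h1, h2⟩ := b_sim_ground Γ hb hp q hpq
  exact h1.trans (b_nil_ground Γ hΓ hb q' h2)

end Bfacts

end BPA

namespace BPA

open Relation List Classical

variable {C A : Type}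

section Qb

variable (Γ : BPA C A) (R : Set C) (b : List C → List C → Prop)

/-- Branching-bisimilar prefixes with a common tail (up to `nf`). -/
def Qb (x y : List C) : Prop :=
  ∃ p q w, nf R x = nf R (p ++ w) ∧ nf R y = nf R (q ++ w) ∧ b p q

theorem qb_symm (hsym : Symmetric b) : Symmetric (Qb R b) := by
  rintro x y ⟨p, q, w, hx, hy, hpq⟩
  exact ⟨q, p, w, hy, hx, hsym hpq⟩

theorem semiCond_qb (hΓ : Γ.Normed) (hR : R ⊆ Γ.GroundC)
    (hb : Γ.IsBranchingBisim b) : Γ.SemiCond R (Qb R b) := by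
  rintro x y ⟨p, q, w, hx, hy, hpq⟩
  have e := ground_nf_iff Γ R hR
  refine ⟨?_, ?_, ?_⟩
  · -- ground condition
    intro hg
    have h1 : Γ.TauStar (p ++ w) [] := (e _).2 (by rw [← hx]; exact (e x).1 hg)
    have hpg : Γ.TauStar p [] := tauStar_prefix Γ h1 p w rfl
    have hwg : Γ.TauStar w [] := tauStar_suffix Γ h1 p w rfl
    have hqg : Γ.TauStar q [] := b_ground Γ hΓ hb hpq hpg
    exact (e y).2 (by rw [hy]; exact (e _).1 (tauStar_nil_append Γ hqg hwg))
  · -- tau condition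
    intro W x' hW hst
    by_cases hp : p = []
    · -- `p = ε`: descend `q` silently, then mirror the step of `W`
      subst hp
      have hqg : Γ.TauStar q [] := b_nil_ground Γ hΓ hb q hpq
      have hdesc : Γ.TauStar (q ++ w) w := by
        simpa using tauStar_append Γ hqg w
      have rchain : Γ.TauStarR R (nf R y) (nf R w) := by
        rw [hy]; exact tauStar_reify Γ R hdesc
      have hWw : nf R w = nf R W := by rw [hW, hx]; simp
      refine ⟨nf R w, rchain,
        ⟨[], [], w, by simpa using hx, by simp [nf_idem], hb.1.refl []⟩,
        Or.inl ⟨nf R x', ⟨W, x', hWw, rfl, hst⟩,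
          ⟨[], [], x', by simp, by simp [nf_idem], hb.1.refl []⟩⟩⟩
    · obtain ⟨X, p₂, rfl⟩ := List.exists_cons_of_ne_nil hp
      by_cases hnx : nf R x = []
      · -- dead: everything is silently terminating; descend fully and mirror
        have hpu : nf R (X :: p₂ ++ w) = [] := by rw [← hx]; exact hnx
        have hall := (nf_eq_nil_iff R).1 hpu
        have hpall : ∀ Y ∈ X :: p₂, Y ∈ R := by
          intro Y hY
          refine hall Y ?_
          simp only [List.cons_append, List.mem_cons, List.mem_append] at hY ⊢
          tauto
        have hwall : ∀ Y ∈ w, Y ∈ R := by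
          intro Y hY
          refine hall Y ?_
          simp only [List.cons_append, List.mem_cons, List.mem_append]
          tauto
        have hqg : Γ.TauStar q [] :=
          b_ground Γ hΓ hb hpq (tauStar_allR Γ R hR hpall)
        have hdesc : Γ.TauStar (q ++ w) [] :=
          tauStar_nil_append Γ hqg (tauStar_allR Γ R hR hwall)
        have rchain : Γ.TauStarR R (nf R y) [] := by
          rw [hy]
          have := tauStar_reify Γ R hdesc
          simpa [nf_nil] using this
        have hWnil : ([] : List C) = nf R W := by rw [hW, hnx]
        refine ⟨[], rchain,
          ⟨[], [], [], by simp [hnx, nf_nil], by simp [nf_nil], hb.1.refl []⟩,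
          Or.inl ⟨nf R x', ⟨W, x', hWnil, rfl, hst⟩,
            ⟨[], [], x', by simp, by simp [nf_idem], hb.1.refl []⟩⟩⟩
      · -- live: transfer the head step through `b`
        have hne : nf R (X :: p₂ ++ w) ≠ [] := by rw [← hx]; exact hnx
        obtain ⟨t, hhd, hκ⟩ := head_mirror R p₂ w hne
        obtain ⟨ρ, hρ, hWdec⟩ := nf_decomp R W
        have hWform : W = X :: (t ++ ρ) := by
          rw [hWdec, hW, hx, hhd]; rfl
        obtain ⟨X', κ, βW, hrule, hWeq, hx'eq⟩ := hst
        rw [hWform] at hWeq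
        injection hWeq with hX hβW
        subst hX
        have hx'form : x' = κ ++ (t ++ ρ) := by rw [hx'eq, ← hβW]
        have hpstep : Γ.Step Γ.tau (X :: p₂) (κ ++ p₂) :=
          ⟨X, κ, p₂, hrule, rfl, rfl⟩
        have hnfx' : nf R x' = nf R ((κ ++ p₂) ++ w) := by
          rw [hx'form, ← List.append_assoc, nf_append_mem R hρ, hκ]
        by_cases hinv : b (X :: p₂) (κ ++ p₂)
        · -- invisible in `b`: stay
          refine ⟨nf R y, ReflTransGen.refl,
            ⟨X :: p₂, q, w, hx, by rw [nf_idem]; exact hy, hpq⟩,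
            Or.inr ⟨κ ++ p₂, q, w, hnfx', by rw [nf_idem]; exact hy,
              hb.1.trans (hb.1.symm hinv) hpq⟩⟩
        · -- visible in `b`: transfer
          obtain ⟨β'', β', hrc, hstep', _, hrel⟩ :=
            (hb.2 _ q hpq).2 (κ ++ p₂) hpstep hinv
          have hqβ : b q β'' := by
            rcases relChain_anchor hrc with h' | h'
            · rw [h']; exact hb.1.refl q
            · exact h'
          have rchain : Γ.TauStarR R (nf R y) (nf R (β'' ++ w)) := by
            rw [hy]
            exact tauStar_reify Γ R (tauStar_append Γ (relChain_to_star hrc) w)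
          refine ⟨nf R (β'' ++ w), rchain,
            ⟨X :: p₂, β'', w, hx, by rw [nf_idem], hb.1.trans hpq hqβ⟩,
            Or.inl ⟨nf R (β' ++ w),
              stepR_of_step Γ R (step_append Γ hstep' w),
              ⟨κ ++ p₂, β', w, hnfx', by rw [nf_idem], hrel⟩⟩⟩
  · -- visible condition
    intro a ha W x' hW hst
    by_cases hp : p = []
    · subst hp
      have hqg : Γ.TauStar q [] := b_nil_ground Γ hΓ hb q hpq
      have hdesc : Γ.TauStar (q ++ w) w := by
        simpa using tauStar_append Γ hqg w
      have rchain : Γ.TauStarR R (nf R y) (nf R w) := by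
        rw [hy]; exact tauStar_reify Γ R hdesc
      have hWw : nf R w = nf R W := by rw [hW, hx]; simp
      exact ⟨nf R w, nf R x', rchain,
        ⟨[], [], w, by simpa using hx, by simp [nf_idem], hb.1.refl []⟩,
        ⟨W, x', hWw, rfl, hst⟩,
        ⟨[], [], x', by simp, by simp [nf_idem], hb.1.refl []⟩⟩
    · obtain ⟨X, p₂, rfl⟩ := List.exists_cons_of_ne_nil hp
      by_cases hnx : nf R x = []
      · have hpu : nf R (X :: p₂ ++ w) = [] := by rw [← hx]; exact hnx
        have hall := (nf_eq_nil_iff R).1 hpu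
        have hpall : ∀ Y ∈ X :: p₂, Y ∈ R := by
          intro Y hY
          refine hall Y ?_
          simp only [List.cons_append, List.mem_cons, List.mem_append] at hY ⊢
          tauto
        have hwall : ∀ Y ∈ w, Y ∈ R := by
          intro Y hY
          refine hall Y ?_
          simp only [List.cons_append, List.mem_cons, List.mem_append]
          tauto
        have hqg : Γ.TauStar q [] :=
          b_ground Γ hΓ hb hpq (tauStar_allR Γ R hR hpall)
        have hdesc : Γ.TauStar (q ++ w) [] :=
          tauStar_nil_append Γ hqg (tauStar_allR Γ R hR hwall)
        have rchain : Γ.TauStarR R (nf R y) [] := by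
          rw [hy]
          have := tauStar_reify Γ R hdesc
          simpa [nf_nil] using this
        have hWnil : ([] : List C) = nf R W := by rw [hW, hnx]
        exact ⟨[], nf R x', rchain,
          ⟨[], [], [], by simp [hnx, nf_nil], by simp [nf_nil], hb.1.refl []⟩,
          ⟨W, x', hWnil, rfl, hst⟩,
          ⟨[], [], x', by simp, by simp [nf_idem], hb.1.refl []⟩⟩
      · have hne : nf R (X :: p₂ ++ w) ≠ [] := by rw [← hx]; exact hnx
        obtain ⟨t, hhd, hκ⟩ := head_mirror R p₂ w hne
        obtain ⟨ρ, hρ, hWdec⟩ := nf_decomp R W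
        have hWform : W = X :: (t ++ ρ) := by
          rw [hWdec, hW, hx, hhd]; rfl
        obtain ⟨X', κ, βW, hrule, hWeq, hx'eq⟩ := hst
        rw [hWform] at hWeq
        injection hWeq with hX hβW
        subst hX
        have hx'form : x' = κ ++ (t ++ ρ) := by rw [hx'eq, ← hβW]
        have hpstep : Γ.Step a (X :: p₂) (κ ++ p₂) :=
          ⟨X, κ, p₂, hrule, rfl, rfl⟩
        have hnfx' : nf R x' = nf R ((κ ++ p₂) ++ w) := by
          rw [hx'form, ← List.append_assoc, nf_append_mem R hρ, hκ]
        obtain ⟨β'', β', hrc, hstep', hrel⟩ :=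
          (hb.2 _ q hpq).1 a ha (κ ++ p₂) hpstep
        have hqβ : b q β'' := by
          rcases relChain_anchor hrc with h' | h'
          · rw [h']; exact hb.1.refl q
          · exact h'
        have rchain : Γ.TauStarR R (nf R y) (nf R (β'' ++ w)) := by
          rw [hy]
          exact tauStar_reify Γ R (tauStar_append Γ (relChain_to_star hrc) w)
        exact ⟨nf R (β'' ++ w), nf R (β' ++ w), rchain,
          ⟨X :: p₂, β'', w, hx, by rw [nf_idem], hb.1.trans hpq hqβ⟩,
          stepR_of_step Γ R (step_append Γ hstep' w),
          ⟨κ ++ p₂, β', w, hnfx', by rw [nf_idem], hrel⟩⟩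

end Qb

end BPA

/-- If `γ ≃_R δ` and `α ≃ β` then `αγ ≃_R βδ`; in particular
`γ ≃_R δ` implies `αγ ≃_R αδ` for every `α`. -/
theorem RBisim_congruence {C A : Type} (Γ : BPA C A) (hΓ : Γ.Normed)
    (R : Set C) (hR : R ⊆ Γ.GroundC) (γ δ : List C) (h : Γ.RBisim R γ δ) :
    (∀ α β, Γ.Bisim α β → Γ.RBisim R (α ++ γ) (β ++ δ)) ∧
    (∀ α, Γ.RBisim R (α ++ γ) (α ++ δ)) := by
  obtain ⟨s, hs, hγδ⟩ := h
  have hmix : ∀ α : List C, Γ.Nu R (α ++ γ) (α ++ δ) := fun α =>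
    ⟨BPA.Qmix R s, BPA.qmix_symm R s (fun _ _ hab => hs.1.symm hab),
      BPA.semiCond_qmix Γ R s hR hs, ⟨α, γ, δ, rfl, rfl, hγδ⟩⟩
  constructor
  · intro α β hbis
    obtain ⟨b, hb, hab⟩ := hbis
    have h1 : Γ.Nu R (α ++ γ) (β ++ γ) :=
      ⟨BPA.Qb R b, BPA.qb_symm R b (fun _ _ h' => hb.1.symm h'),
        BPA.semiCond_qb Γ R b hΓ hR hb, ⟨α, β, γ, rfl, rfl, hab⟩⟩
    exact ⟨Γ.Nu R, BPA.isRBisim_nu Γ R hR,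
      BPA.nu_trans Γ R hR h1 (hmix β)⟩
  · intro α
    exact ⟨Γ.Nu R, BPA.isRBisim_nu Γ R hR, hmix α⟩
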